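/- In ℂ[x₁,x₂,x₃,x₄] let y₁ = x₁⁶+x₂⁶+x₃⁶+x₄⁶, y₂ = x₁x₂x₃x₄, y₃ = x₁⁴+x₂⁴+x₃⁴+x₄⁴, y₄ = x₁²+x₂²+x₃²+x₄² (the D₄ basic invariants). Then the symmetric 4×4 matrix with entries g^{ij} := ∑_{a=1}^{4} (∂yᵢ/∂xₐ)(∂yⱼ/∂xₐ) satisfies, as identities of polynomials: g^{11} = 30y₁y₃ − 180y₂²y₄ + 30y₁y₄² − 30y₃y₄³ + 6y₄⁵, g^{12} = 6y₂y₃, g^{13} = 32y₁y₄ − 96y₂² + 12y₃² − 24y₃y₄² + 4y₄⁴, g^{14} = 12y₁, g^{22} = (1/6)(2y₁ − 3y₃y₄ + y₄³), g^{23} = 4y₂y₄, g^{24} = 8y₂, g^{33} = 16y₁, g^{34} = 8y₃, g^{44} = 4y₄. -/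
import Mathlib


open MvPolynomial

noncomputable section

/-- The `D₄` basic invariant `y₁ = ∑ xᵢ⁶`. -/
def y₁D4 : MvPolynomial (Fin 4) ℂ := X 0 ^ 6 + X 1 ^ 6 + X 2 ^ 6 + X 3 ^ 6

/-- The `D₄` basic invariant `y₂ = x₁x₂x₃x₄`. -/
def y₂D4 : MvPolynomial (Fin 4) ℂ := X 0 * X 1 * X 2 * X 3

/-- The `D₄` basic invariant `y₃ = ∑ xᵢ⁴`. -/
def y₃D4 : MvPolynomial (Fin 4) ℂ := X 0 ^ 4 + X 1 ^ 4 + X 2 ^ 4 + X 3 ^ 4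

/-- The `D₄` basic invariant `y₄ = ∑ xᵢ²`. -/
def y₄D4 : MvPolynomial (Fin 4) ℂ := X 0 ^ 2 + X 1 ^ 2 + X 2 ^ 2 + X 3 ^ 2

set_option maxHeartbeats 2000000 in
/-- The intersection form `g^{ij} = (∇yᵢ, ∇yⱼ)` of `D₄` in the basic invariants. -/
theorem statement_10 :
    (∑ a, pderiv a y₁D4 * pderiv a y₁D4)
      = 30 * y₁D4 * y₃D4 - 180 * y₂D4 ^ 2 * y₄D4 + 30 * y₁D4 * y₄D4 ^ 2
        - 30 * y₃D4 * y₄D4 ^ 3 + 6 * y₄D4 ^ 5 ∧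
    (∑ a, pderiv a y₁D4 * pderiv a y₂D4) = 6 * y₂D4 * y₃D4 ∧
    (∑ a, pderiv a y₁D4 * pderiv a y₃D4)
      = 32 * y₁D4 * y₄D4 - 96 * y₂D4 ^ 2 + 12 * y₃D4 ^ 2 - 24 * y₃D4 * y₄D4 ^ 2
        + 4 * y₄D4 ^ 4 ∧
    (∑ a, pderiv a y₁D4 * pderiv a y₄D4) = 12 * y₁D4 ∧
    (∑ a, pderiv a y₂D4 * pderiv a y₂D4)
      = C ((1 : ℂ) / 6) * (2 * y₁D4 - 3 * y₃D4 * y₄D4 + y₄D4 ^ 3) ∧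
    (∑ a, pderiv a y₂D4 * pderiv a y₃D4) = 4 * y₂D4 * y₄D4 ∧
    (∑ a, pderiv a y₂D4 * pderiv a y₄D4) = 8 * y₂D4 ∧
    (∑ a, pderiv a y₃D4 * pderiv a y₃D4) = 16 * y₁D4 ∧
    (∑ a, pderiv a y₃D4 * pderiv a y₄D4) = 8 * y₃D4 ∧
    (∑ a, pderiv a y₄D4 * pderiv a y₄D4) = 4 * y₄D4 := by
  have h6 : (C ((1 : ℂ) / 6) : MvPolynomial (Fin 4) ℂ) * 6 = 1 := by
    rw [show (6 : MvPolynomial (Fin 4) ℂ) = C 6 by rw [map_ofNat], ← C_mul]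
    norm_num
  refine ⟨?_, ?_, ?_, ?_, ?g5, ?_, ?_, ?_, ?_, ?_⟩
  case g5 =>
    have h : (6 : MvPolynomial (Fin 4) ℂ) *
        (∑ a, pderiv a y₂D4 * pderiv a y₂D4)
        = 2 * y₁D4 - 3 * y₃D4 * y₄D4 + y₄D4 ^ 3 := by
      simp only [y₁D4, y₂D4, y₃D4, y₄D4, Fin.sum_univ_four, map_add, pderiv_mul, pderiv_pow,
        pderiv_X, Pi.single_apply, Fin.isValue, Fin.reduceEq, ite_true, ite_false, mul_zero,
        zero_mul, mul_one, one_mul, add_zero, zero_add]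
      ring
    rw [← h, ← mul_assoc, h6, one_mul]
  all_goals (
    simp only [y₁D4, y₂D4, y₃D4, y₄D4, Fin.sum_univ_four, map_add, pderiv_mul, pderiv_pow,
      pderiv_X, Pi.single_apply, Fin.isValue, Fin.reduceEq, ite_true, ite_false, mul_zero,
      zero_mul, mul_one, one_mul, add_zero, zero_add]
    ring)
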